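/- In the weighted two-way fixed effects regression min over (μ_i)_{i=0}^N, (α_t)_{t=1}^S of ∑ over (i,t) with (i,t) ≠ (0,S), i ∈ {0,…,N}, t ∈ {1,…,S}, of w_i (y_{it} − μ_i − α_t)² with weights w_0 = 1, w_i ≥ 0, ∑_{i=1}^N w_i = 1 and S ≥ 2, any minimizer satisfies μ_0 + α_S = (1/(S−1)) ∑_{t=1}^{S−1} y_{0t} + ∑_{i=1}^N w_i ( y_{iS} − (1/(S−1)) ∑_{t=1}^{S−1} y_{it} ). -/

import Mathlib

open Finset

/-- Weighted two-way fixed effects objective: times are `0, …, S-1` (so the paper's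
time `S` is index `S-1`), and the cell `(0, S-1)` is excluded. -/
noncomputable def twfeObjective (N S : ℕ) (w : ℕ → ℝ) (y : ℕ → ℕ → ℝ)
    (μ α : ℕ → ℝ) : ℝ :=
  ∑ i ∈ range (N + 1), ∑ t ∈ range S,
    if i = 0 ∧ t = S - 1 then 0 else w i * (y i t - μ i - α t) ^ 2

lemma quad_foc (a b : ℝ) (ha : 0 ≤ a) (h : ∀ ε : ℝ, 0 ≤ ε^2*a + ε*b) : b = 0 := by
  by_contra hb
  have hpos : 0 < a + 1 := by linarith
  have h1 := h (-(b/(a+1)))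
  have key : (-(b/(a+1)))^2 * a + -(b/(a+1)) * b = -(b^2) * (1 / (a+1)^2) := by
    field_simp; ring
  rw [key] at h1
  have hb2 : 0 < b^2 := by positivity
  nlinarith [mul_pos hb2 (by positivity : (0:ℝ) < 1/(a+1)^2)]

lemma foc (N S : ℕ) (w : ℕ → ℝ) (hwn : ∀ i, 0 ≤ w i) (y : ℕ → ℕ → ℝ) (μ α : ℕ → ℝ)
    (hmin : ∀ μ' α' : ℕ → ℝ, twfeObjective N S w y μ α ≤ twfeObjective N S w y μ' α')
    (u v : ℕ → ℝ) :
    ∑ i ∈ range (N + 1), ∑ t ∈ range S,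
      (if i = 0 ∧ t = S - 1 then 0 else w i * (y i t - μ i - α t) * (u i + v t)) = 0 := by
  set A := ∑ i ∈ range (N+1), ∑ t ∈ range S,
      (if i = 0 ∧ t = S - 1 then 0 else w i * (u i + v t)^2) with hA
  set B := ∑ i ∈ range (N+1), ∑ t ∈ range S,
      (if i = 0 ∧ t = S - 1 then 0 else w i * (y i t - μ i - α t) * (u i + v t)) with hB
  have hApos : 0 ≤ A := by
    apply Finset.sum_nonneg; intro i _
    apply Finset.sum_nonneg; intro t _
    split_ifs
    · exact le_refl _
    · exact mul_nonneg (hwn i) (sq_nonneg _)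
  have key : ∀ ε : ℝ, 0 ≤ ε^2 * A + ε * (-2*B) := by
    intro ε
    have h := hmin (fun i => μ i + ε * u i) (fun t => α t + ε * v t)
    have expand : twfeObjective N S w y (fun i => μ i + ε * u i) (fun t => α t + ε * v t) =
        twfeObjective N S w y μ α + ε^2 * A + (-2*ε) * B := by
      unfold twfeObjective
      rw [hA, hB]
      simp only [Finset.mul_sum, ← Finset.sum_add_distrib]
      refine Finset.sum_congr rfl fun i _ => ?_
      refine Finset.sum_congr rfl fun t _ => ?_
      split_ifs <;> ring
    rw [expand] at h
    have hring : ε * (-2*B) = (-2*ε) * B := by ring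
    linarith
  have := quad_foc A (-2*B) hApos key
  linarith

lemma range_succ_split (N : ℕ) (f : ℕ → ℝ) :
    ∑ i ∈ range (N+1), f i = f 0 + ∑ i ∈ Icc 1 N, f i := by
  rw [Finset.range_eq_Ico, Finset.sum_eq_sum_Ico_succ_bot (Nat.succ_pos N), Nat.succ_eq_add_one, Finset.Ico_add_one_right_eq_Icc,
    zero_add]

theorem twfe_forecast_characterization (N S : ℕ) (hS : 2 ≤ S)
    (w : ℕ → ℝ) (hw0 : w 0 = 1) (hwn : ∀ i, 0 ≤ w i)
    (hws : ∑ i ∈ Icc 1 N, w i = 1)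
    (y : ℕ → ℕ → ℝ) (μ α : ℕ → ℝ)
    (hmin : ∀ μ' α' : ℕ → ℝ,
      twfeObjective N S w y μ α ≤ twfeObjective N S w y μ' α') :
    μ 0 + α (S - 1) =
      (1 / ((S : ℝ) - 1)) * ∑ t ∈ range (S - 1), y 0 t +
        ∑ i ∈ Icc 1 N, w i *
          (y i (S - 1) - (1 / ((S : ℝ) - 1)) * ∑ t ∈ range (S - 1), y i t) := by
  obtain ⟨T, rfl⟩ : ∃ T, S = T + 2 := ⟨S - 2, by omega⟩
  have hsub : T + 2 - 1 = T + 1 := rfl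
  rw [hsub]
  set c : ℝ := (T : ℝ) + 1 with hc
  have hcast : ((T + 2 : ℕ) : ℝ) - 1 = c := by push_cast; ring
  rw [hcast]
  have hcpos : (0:ℝ) < c := by positivity
  -- FOC for μ 0
  have f1 := foc N (T+2) w hwn y μ α hmin (fun i => if i = 0 then 1 else 0) (fun _ => 0)
  rw [Finset.sum_eq_single 0 (fun b _ hb => by simp [hb]) (by simp)] at f1
  simp only [hsub, if_pos rfl, add_zero, hw0, one_mul, true_and, if_true, mul_one] at f1
  rw [Finset.sum_range_succ, if_pos rfl, add_zero] at f1
  have hP : ∑ t ∈ range (T+1), (y 0 t - μ 0 - α t) = 0 := by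
    rw [← f1]
    exact Finset.sum_congr rfl fun t ht => by
      rw [if_neg (by simpa using (Finset.mem_range.mp ht).ne)]
  -- FOC for α (T+1)
  have f3 := foc N (T+2) w hwn y μ α hmin (fun _ => 0) (fun t => if t = T+1 then 1 else 0)
  rw [range_succ_split] at f3
  have hz : (∑ t ∈ range (T + 2), if (0:ℕ) = 0 ∧ t = T + 2 - 1 then (0:ℝ)
      else w 0 * (y 0 t - μ 0 - α t) * ((0:ℝ) + if t = T + 1 then 1 else 0)) = 0 :=
    Finset.sum_eq_zero fun t _ => by by_cases h : t = T + 1 <;> simp [h, hsub]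
  rw [hz, zero_add] at f3
  have hR : ∑ i ∈ Icc 1 N, w i * (y i (T+1) - μ i - α (T+1)) = 0 := by
    rw [← f3]
    refine Finset.sum_congr rfl fun i hi => ?_
    have hne : i ≠ 0 := by have := (Finset.mem_Icc.mp hi).1; omega
    rw [Finset.sum_eq_single (T+1)
      (fun b _ hb => by simp [hb])
      (fun h' => absurd (Finset.mem_range.mpr (by omega)) h')]
    simp [hne, hsub]
  -- FOC for μ i, i ≥ 1
  have f2 : ∀ i₀ ∈ Icc 1 N, ∑ t ∈ range (T+2), w i₀ * (y i₀ t - μ i₀ - α t) = 0 := by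
    intro i₀ hi₀
    have hne : i₀ ≠ 0 := by have := (Finset.mem_Icc.mp hi₀).1; omega
    have h := foc N (T+2) w hwn y μ α hmin (fun i => if i = i₀ then 1 else 0) (fun _ => 0)
    rw [Finset.sum_eq_single i₀
      (fun b _ hb => Finset.sum_eq_zero fun t _ => by simp [hb])
      (fun h' => absurd (Finset.mem_range.mpr
        (by have := (Finset.mem_Icc.mp hi₀).2; omega)) h')] at h
    rw [← h]
    exact Finset.sum_congr rfl fun t _ => by simp [hne]
  have hQ : ∑ i ∈ Icc 1 N, ∑ t ∈ range (T+1), w i * (y i t - μ i - α t) = 0 := by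
    have hQfull : ∑ i ∈ Icc 1 N, ∑ t ∈ range (T+2), w i * (y i t - μ i - α t) = 0 :=
      Finset.sum_eq_zero f2
    have hsplit2 : ∑ i ∈ Icc 1 N, ∑ t ∈ range (T+2), w i * (y i t - μ i - α t)
        = (∑ i ∈ Icc 1 N, ∑ t ∈ range (T+1), w i * (y i t - μ i - α t))
          + ∑ i ∈ Icc 1 N, w i * (y i (T+1) - μ i - α (T+1)) := by
      rw [← Finset.sum_add_distrib]
      exact Finset.sum_congr rfl fun i _ => Finset.sum_range_succ _ _
    rw [hsplit2] at hQfull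
    linarith [hR]
  -- algebra
  have inner : ∀ i, ∑ t ∈ range (T+1), (y i t - μ i - α t)
      = (∑ t ∈ range (T+1), y i t) - c * μ i - (∑ t ∈ range (T+1), α t) := by
    intro i
    rw [Finset.sum_sub_distrib, Finset.sum_sub_distrib, Finset.sum_const, Finset.card_range,
      nsmul_eq_mul]
    push_cast [hc]
    ring
  set A' := ∑ t ∈ range (T+1), α t with hA'
  set P := ∑ t ∈ range (T+1), y 0 t with hPdef
  set M := ∑ i ∈ Icc 1 N, w i * μ i with hM
  set R := ∑ i ∈ Icc 1 N, w i * y i (T+1) with hRdef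
  set Q' := ∑ i ∈ Icc 1 N, w i * ∑ t ∈ range (T+1), y i t with hQ'
  have e1 : P - c * μ 0 - A' = 0 := by rw [← inner 0]; exact hP
  have e3 : R - M - α (T+1) = 0 := by
    rw [← hR, hRdef, hM]
    have : ∀ i, w i * (y i (T+1) - μ i - α (T+1))
        = w i * y i (T+1) - w i * μ i - α (T+1) * w i := fun i => by ring
    simp_rw [this]
    rw [Finset.sum_sub_distrib, Finset.sum_sub_distrib, ← Finset.mul_sum, hws, mul_one]
  have e2 : Q' - c * M - A' = 0 := by
    rw [← hQ, hQ', hM]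
    have step : ∀ i, ∑ t ∈ range (T+1), w i * (y i t - μ i - α t)
        = w i * ∑ t ∈ range (T+1), (y i t - μ i - α t) := fun i => (Finset.mul_sum _ _ _).symm
    simp_rw [step, inner]
    have : ∀ i, w i * ((∑ t ∈ range (T+1), y i t) - c * μ i - A')
        = w i * ∑ t ∈ range (T+1), y i t - c * (w i * μ i) - A' * w i := fun i => by ring
    simp_rw [this]
    rw [Finset.sum_sub_distrib, Finset.sum_sub_distrib, ← Finset.mul_sum, ← Finset.mul_sum,
      hws, mul_one]
  have goalsum : ∑ i ∈ Icc 1 N, w i * (y i (T+1) - 1/c * ∑ t ∈ range (T+1), y i t)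
      = R - 1/c * Q' := by
    rw [hRdef, hQ']
    have : ∀ i, w i * (y i (T+1) - 1/c * ∑ t ∈ range (T+1), y i t)
        = w i * y i (T+1) - 1/c * (w i * ∑ t ∈ range (T+1), y i t) := fun i => by ring
    simp_rw [this]
    rw [Finset.sum_sub_distrib, ← Finset.mul_sum]
  rw [goalsum]
  have hcne : c ≠ 0 := ne_of_gt hcpos
  field_simp
  simp only [hc] at e1 e2 e3 ⊢
  linear_combination e2 - e1 - ((T:ℝ)+1)*e3
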